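/- Let I₁,…,I_s be disjoint closed intervals. Then E_{mn}(I₁,…,I_s) ≤ ε_m({−1,1}; E_n(I₁,…,I_s)), where E_n(I₁,…,I_s) = max_{y ∈ [−1,1]^s} min_{P ∈ 𝒫_n} max_i sup_{t ∈ I_i} |P(t) − y_i|, and ε_m(Y;δ) is the smallest ε such that there exists P ∈ 𝒫_m with |P(t) − y| ≤ ε whenever |t − y| ≤ δ, y ∈ Y. -/

import Mathlib

open Polynomial Set

/-- Best error of simultaneous approximation of the values `y i` on the sets `I i`
by a polynomial of degree `≤ n`. -/
noncomputable def bestErr {s : ℕ} (n : ℕ) (I : Fin s → Set ℝ) (y : Fin s → ℝ) : ℝ :=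
  sInf {e : ℝ | ∃ P : Polynomial ℝ, P.natDegree ≤ n ∧ ∀ i, ∀ t ∈ I i, |P.eval t - y i| ≤ e}

/-- `E_n(I₁,…,I_s)`: worst case over `y ∈ [-1,1]^s` of the best approximation error. -/
noncomputable def En {s : ℕ} (n : ℕ) (I : Fin s → Set ℝ) : ℝ :=
  sSup {e : ℝ | ∃ y : Fin s → ℝ, (∀ i, |y i| ≤ 1) ∧ e = bestErr n I y}

/-- `ε_n(Y;δ)`: the smallest `ε` such that some polynomial of degree `≤ n` maps the
`δ`-neighborhood of each `y ∈ Y` into the `ε`-neighborhood of `y`. -/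
noncomputable def epsN (n : ℕ) (Y : Set ℝ) (δ : ℝ) : ℝ :=
  sInf {e : ℝ | ∃ P : Polynomial ℝ, P.natDegree ≤ n ∧
    ∀ y ∈ Y, ∀ t : ℝ, |t - y| ≤ δ → |P.eval t - y| ≤ e}

lemma sum_prod_bool {s : ℕ} (f : Fin s → Bool → ℝ) :
    ∑ σ : Fin s → Bool, ∏ i, f i (σ i) = ∏ i, (f i true + f i false) := by
  rw [← Fintype.prod_sum]
  exact Fintype.prod_congr _ _ fun i => by simp [Fintype.sum_bool]

theorem En_amplification {s : ℕ} (m n : ℕ) (a b : Fin s → ℝ)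
    (hab : ∀ i, a i ≤ b i)
    (hdisj : Pairwise fun i j => Disjoint (Set.Icc (a i) (b i)) (Set.Icc (a j) (b j))) :
    En (m * n) (fun i => Set.Icc (a i) (b i)) ≤
      epsN m ({-1, 1} : Set ℝ) (En n (fun i => Set.Icc (a i) (b i))) := by
  set I : Fin s → Set ℝ := fun i => Set.Icc (a i) (b i) with hI
  -- First deal with the degenerate case s = 0
  rcases eq_or_ne s 0 with hs | hs
  · subst hs
    have hbe : ∀ (k : ℕ) (y : Fin 0 → ℝ), bestErr k I y = 0 := by
      intro k y
      have : {e : ℝ | ∃ P : Polynomial ℝ, P.natDegree ≤ k ∧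
          ∀ i, ∀ t ∈ I i, |P.eval t - y i| ≤ e} = Set.univ := by
        ext e; simp only [Set.mem_setOf_eq, Set.mem_univ, iff_true]
        exact ⟨0, by simp, fun i => i.elim0⟩
      rw [bestErr, this]
      apply Real.sInf_of_not_bddBelow
      rintro ⟨x, hx⟩
      have := hx (Set.mem_univ (x - 1))
      linarith
    have hEn : ∀ k : ℕ, En k I = 0 := by
      intro k
      have : {e : ℝ | ∃ y : Fin 0 → ℝ, (∀ i, |y i| ≤ 1) ∧ e = bestErr k I y} = {0} := by
        ext e
        simp only [Set.mem_setOf_eq, Set.mem_singleton_iff]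
        constructor
        · rintro ⟨y, -, rfl⟩; exact hbe k y
        · rintro rfl; exact ⟨Fin.elim0, fun i => i.elim0, (hbe k _).symm⟩
      rw [En, this, csSup_singleton]
    rw [hEn]
    apply Real.sInf_nonneg
    rintro e ⟨Q, -, hQ⟩
    have := hQ 1 (by simp) 1 (by simp [hEn])
    exact le_trans (abs_nonneg _) this
  -- Main case: s ≠ 0
  have hs0 : 0 < s := Nat.pos_of_ne_zero hs
  set i₀ : Fin s := ⟨0, hs0⟩
  have hIne : ∀ i, a i ∈ I i := fun i => Set.mem_Icc.2 ⟨le_refl _, hab i⟩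
  -- basic sets
  set errSet : ℕ → (Fin s → ℝ) → Set ℝ := fun k y =>
    {e : ℝ | ∃ P : Polynomial ℝ, P.natDegree ≤ k ∧ ∀ i, ∀ t ∈ I i, |P.eval t - y i| ≤ e}
    with herrSet
  have hbe_def : ∀ k y, bestErr k I y = sInf (errSet k y) := fun k y => rfl
  have hset_nonneg : ∀ k y, ∀ e ∈ errSet k y, 0 ≤ e := by
    rintro k y e ⟨P, -, hP⟩
    exact le_trans (abs_nonneg _) (hP i₀ (a i₀) (hIne i₀))
  have hset_bdd : ∀ k y, BddBelow (errSet k y) := fun k y => ⟨0, fun e he => hset_nonneg k y e he⟩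
  have hone_mem : ∀ k y, (∀ i, |y i| ≤ 1) → (1 : ℝ) ∈ errSet k y := by
    intro k y hy
    refine ⟨0, by simp, fun i t _ => ?_⟩
    simpa using hy i
  have hbe_nonneg : ∀ k y, 0 ≤ bestErr k I y := fun k y =>
    Real.sInf_nonneg (hset_nonneg k y)
  have hbe_le_one : ∀ k y, (∀ i, |y i| ≤ 1) → bestErr k I y ≤ 1 := fun k y hy =>
    csInf_le (hset_bdd k y) (hone_mem k y hy)
  set δ := En n I with hδ
  have hδ0 : 0 ≤ δ := by
    apply Real.sSup_nonneg
    rintro e ⟨y, hy, rfl⟩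
    exact hbe_nonneg n y
  have hbe_le_δ : ∀ y : Fin s → ℝ, (∀ i, |y i| ≤ 1) → bestErr n I y ≤ δ := by
    intro y hy
    exact le_csSup ⟨1, by rintro e ⟨z, hz, rfl⟩; exact hbe_le_one n z hz⟩ ⟨y, hy, rfl⟩
  -- the epsN target set
  set Eset : Set ℝ := {e : ℝ | ∃ Q : Polynomial ℝ, Q.natDegree ≤ m ∧
    ∀ y ∈ ({-1, 1} : Set ℝ), ∀ t : ℝ, |t - y| ≤ δ → |Q.eval t - y| ≤ e} with hEset
  have hEne : (1 : ℝ) ∈ Eset := by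
    refine ⟨0, by simp, ?_⟩
    rintro y hy t -
    rcases hy with rfl | rfl <;> simp
  show En (m * n) I ≤ sInf Eset
  refine Real.sSup_le ?_ (Real.sInf_nonneg ?_)
  swap
  · rintro e ⟨Q, -, hQ⟩
    exact le_trans (abs_nonneg _) (hQ 1 (by simp) 1 (by simpa using hδ0))
  rintro e ⟨y, hy, rfl⟩
  refine le_csInf ⟨1, hEne⟩ ?_
  rintro ε' ⟨Q, hQdeg, hQ⟩
  -- Lipschitz constant for Q on K
  set K : Set ℝ := Set.Icc (-(2 + δ)) (2 + δ) with hK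
  obtain ⟨x₀, -, hCmax⟩ := isCompact_Icc.exists_isMaxOn
    (Set.nonempty_Icc.2 (by linarith : -(2 + δ) ≤ 2 + δ))
    ((continuous_abs.comp (Polynomial.continuous Q.derivative)).continuousOn)
  set C := |Q.derivative.eval x₀| with hCdef
  have hC : ∀ x ∈ K, |Q.derivative.eval x| ≤ C := fun x hx => hCmax hx
  have hC0 : 0 ≤ C := abs_nonneg _
  have hLip : ∀ u v : ℝ, u ∈ K → v ∈ K → |Q.eval u - Q.eval v| ≤ C * |u - v| := by
    intro u v hu hv
    have := (convex_Icc _ _).norm_image_sub_le_of_norm_deriv_le (f := fun x => Q.eval x)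
      (fun x _ => Q.differentiable.differentiableAt)
      (fun x hx => by rw [Polynomial.deriv]; exact hC x hx) hv hu
    simpa [Real.norm_eq_abs] using this
  -- prove bestErr ≤ ε' + θ for every θ > 0
  refine le_of_forall_pos_le_add ?_
  intro θ hθ
  set η : ℝ := min 1 (θ / (C + 1)) with hηdef
  have hη0 : 0 < η := lt_min one_pos (div_pos hθ (by linarith))
  have hη1 : η ≤ 1 := min_le_left _ _
  have hCη : C * η ≤ θ := by
    have h1 : η ≤ θ / (C + 1) := min_le_right _ _
    have h2 : C * η ≤ C * (θ / (C + 1)) := mul_le_mul_of_nonneg_left h1 hC0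
    have h3 : C * (θ / (C + 1)) ≤ θ := by
      rw [mul_div_assoc']
      rw [div_le_iff₀ (by linarith : (0:ℝ) < C + 1)]
      nlinarith
    linarith
  -- vertices
  set v : (Fin s → Bool) → Fin s → ℝ := fun σ i => if σ i then 1 else -1 with hv
  have hv1 : ∀ σ i, |v σ i| ≤ 1 := by intro σ i; by_cases h : σ i <;> simp [hv, h]
  have hvmem : ∀ σ i, v σ i ∈ ({-1, 1} : Set ℝ) := by
    intro σ i; by_cases h : σ i <;> simp [hv, h]
  -- choose near-optimal polynomials for each vertex
  have hPσ : ∀ σ : Fin s → Bool, ∃ P : Polynomial ℝ, P.natDegree ≤ n ∧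
      ∀ i, ∀ t ∈ I i, |P.eval t - v σ i| ≤ δ + η := by
    intro σ
    obtain ⟨e₀, he₀mem, he₀lt⟩ := Real.lt_sInf_add_pos
      (⟨1, hone_mem n (v σ) (hv1 σ)⟩ : (errSet n (v σ)).Nonempty) hη0
    obtain ⟨P, hPd, hPe⟩ := he₀mem
    have : e₀ < δ + η := lt_of_lt_of_le he₀lt (by
      have := hbe_le_δ (v σ) (hv1 σ)
      rw [hbe_def] at this
      linarith)
    exact ⟨P, hPd, fun i t ht => le_trans (hPe i t ht) this.le⟩
  choose P hPdeg hP using hPσ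
  -- amplified polynomials
  set R : (Fin s → Bool) → Polynomial ℝ := fun σ => Q.comp (P σ) with hR
  have hRdeg : ∀ σ, (R σ).natDegree ≤ m * n := fun σ =>
    le_trans natDegree_comp_le (Nat.mul_le_mul hQdeg (hPdeg σ))
  have hRerr : ∀ σ, ∀ i, ∀ t ∈ I i, |(R σ).eval t - v σ i| ≤ ε' + C * η := by
    intro σ i t ht
    set u := (P σ).eval t with hu
    have huv : |u - v σ i| ≤ δ + η := hP σ i t ht
    set w := v σ i with hw
    set u' : ℝ := max (w - δ) (min (w + δ) u) with hu'
    have hwle : |w| ≤ 1 := hv1 σ i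
    obtain ⟨hwl, hwr⟩ := abs_le.1 hwle
    obtain ⟨hl, hr⟩ := abs_le.1 huv
    have hclamp : |u' - w| ≤ δ ∧ |u - u'| ≤ η := by
      rcases le_total u (w - δ) with h1 | h1
      · rw [hu', min_eq_right (by linarith), max_eq_left h1]
        constructor <;> rw [abs_le] <;> constructor <;> linarith
      · rcases le_total (w + δ) u with h2 | h2
        · rw [hu', min_eq_left h2, max_eq_right (by linarith)]
          constructor <;> rw [abs_le] <;> constructor <;> linarith
        · rw [hu', min_eq_right h2, max_eq_right (by linarith)]
          constructor <;> rw [abs_le] <;> constructor <;> linarith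
    obtain ⟨hc1, hc2⟩ := hclamp
    obtain ⟨hc1l, hc1r⟩ := abs_le.1 hc1
    have huK : u ∈ K := Set.mem_Icc.2 ⟨by linarith, by linarith⟩
    have hu'K : u' ∈ K := Set.mem_Icc.2 ⟨by linarith, by linarith⟩
    have hQu' : |Q.eval u' - w| ≤ ε' := hQ w (hvmem σ i) u' hc1
    have hRt : (R σ).eval t = Q.eval u := by rw [hR]; simp [Polynomial.eval_comp, hu]
    calc |(R σ).eval t - w| = |Q.eval u - w| := by rw [hRt]
      _ ≤ |Q.eval u - Q.eval u'| + |Q.eval u' - w| := abs_sub_le _ _ _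
      _ ≤ C * |u - u'| + ε' := add_le_add (hLip u u' huK hu'K) hQu'
      _ ≤ C * η + ε' := by
          have := mul_le_mul_of_nonneg_left hc2 hC0
          linarith
      _ = ε' + C * η := by ring
  -- weights
  set f : Fin s → Bool → ℝ := fun i c => if c then (1 + y i) / 2 else (1 - y i) / 2 with hf
  have hf0 : ∀ i c, 0 ≤ f i c := by
    intro i c
    obtain ⟨h1, h2⟩ := abs_le.1 (hy i)
    rcases c with _ | _ <;> simp [hf] <;> linarith
  set wt : (Fin s → Bool) → ℝ := fun σ => ∏ i, f i (σ i) with hwt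
  have hwt0 : ∀ σ, 0 ≤ wt σ := fun σ => Finset.prod_nonneg fun i _ => hf0 i (σ i)
  have hwtsum : ∑ σ : Fin s → Bool, wt σ = 1 := by
    rw [hwt]
    simp only
    rw [sum_prod_bool f]
    rw [Finset.prod_eq_one]
    intro i _
    simp [hf]; ring
  have hwtv : ∀ i, ∑ σ : Fin s → Bool, wt σ * v σ i = y i := by
    intro i
    have key : ∀ σ : Fin s → Bool, wt σ * v σ i
        = ∏ j, (f j (σ j) * (if j = i then (if σ j then (1:ℝ) else -1) else 1)) := by
      intro σ
      rw [Finset.prod_mul_distrib]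
      congr 1
      rw [Finset.prod_ite_eq' Finset.univ i (fun j => if σ j then (1:ℝ) else -1)]
      simp [hv]
    rw [Finset.sum_congr rfl fun σ _ => key σ]
    rw [sum_prod_bool (fun j c => f j c * (if j = i then (if c then (1:ℝ) else -1) else 1))]
    have : ∀ j : Fin s, (f j true * (if j = i then (1:ℝ) else 1)
        + f j false * (if j = i then (-1:ℝ) else 1)) = if j = i then y i else 1 := by
      intro j
      rcases eq_or_ne j i with rfl | hji
      · simp [hf]; ring
      · simp [hji, hf]; ring
    rw [Finset.prod_congr rfl fun j _ => by
      simpa using this j]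
    rw [Finset.prod_ite_eq' Finset.univ i (fun _ => y i)]
    simp
  -- final polynomial
  set Pf : Polynomial ℝ := ∑ σ : Fin s → Bool, Polynomial.C (wt σ) * R σ with hPf
  have hPfdeg : Pf.natDegree ≤ m * n := by
    apply Polynomial.natDegree_sum_le_of_forall_le
    intro σ _
    exact le_trans (Polynomial.natDegree_C_mul_le _ _) (hRdeg σ)
  have hPferr : ∀ i, ∀ t ∈ I i, |Pf.eval t - y i| ≤ ε' + C * η := by
    intro i t ht
    have heval : Pf.eval t = ∑ σ : Fin s → Bool, wt σ * (R σ).eval t := by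
      rw [hPf, Polynomial.eval_finset_sum]
      exact Finset.sum_congr rfl fun σ _ => by simp
    have hdiff : Pf.eval t - y i = ∑ σ : Fin s → Bool, wt σ * ((R σ).eval t - v σ i) := by
      rw [heval, ← hwtv i, ← Finset.sum_sub_distrib]
      exact Finset.sum_congr rfl fun σ _ => by ring
    rw [hdiff]
    calc |∑ σ : Fin s → Bool, wt σ * ((R σ).eval t - v σ i)|
        ≤ ∑ σ : Fin s → Bool, |wt σ * ((R σ).eval t - v σ i)| := Finset.abs_sum_le_sum_abs _ _
      _ ≤ ∑ σ : Fin s → Bool, wt σ * (ε' + C * η) := by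
          apply Finset.sum_le_sum
          intro σ _
          rw [abs_mul, abs_of_nonneg (hwt0 σ)]
          exact mul_le_mul_of_nonneg_left (hRerr σ i t ht) (hwt0 σ)
      _ = (∑ σ : Fin s → Bool, wt σ) * (ε' + C * η) := by rw [Finset.sum_mul]
      _ = ε' + C * η := by rw [hwtsum, one_mul]
  have hmem : ε' + C * η ∈ errSet (m * n) y := ⟨Pf, hPfdeg, hPferr⟩
  have : bestErr (m * n) I y ≤ ε' + C * η := csInf_le (hset_bdd _ _) hmem
  linarith
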